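/- If a sequence of random vectors (X_1,...,X_n) is less than (Y_1,...,Y_n) in the supermodular order, then the sum X_1+...+X_n is less than Y_1+...+Y_n in the convex order. -/

import Mathlib

open MeasureTheory ProbabilityTheory Filter Real

/-- A function `φ : ℝⁿ → ℝ` is supermodular if `φ(x ⊔ y) + φ(x ⊓ y) ≥ φ(x) + φ(y)`. -/
def Supermodular {n : ℕ} (φ : (Fin n → ℝ) → ℝ) : Prop :=
  ∀ x y : Fin n → ℝ, φ x + φ y ≤ φ (x ⊔ y) + φ (x ⊓ y)

/-- Supermodular order on random vectors. -/
def SmOrder {Ω : Type*} [MeasurableSpace Ω] (μ : Measure Ω) {n : ℕ}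
    (X Y : Ω → Fin n → ℝ) : Prop :=
  ∀ φ : (Fin n → ℝ) → ℝ, Supermodular φ →
    Integrable (fun ω => φ (X ω)) μ → Integrable (fun ω => φ (Y ω)) μ →
    ∫ ω, φ (X ω) ∂μ ≤ ∫ ω, φ (Y ω) ∂μ

/-- Convex order on real random variables. -/
def CxOrder {Ω : Type*} [MeasurableSpace Ω] (μ : Measure Ω) (X Y : Ω → ℝ) : Prop :=
  ∀ φ : ℝ → ℝ, ConvexOn ℝ Set.univ φ →
    Integrable (fun ω => φ (X ω)) μ → Integrable (fun ω => φ (Y ω)) μ →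
    ∫ ω, φ (X ω) ∂μ ≤ ∫ ω, φ (Y ω) ∂μ

lemma convex_pair {φ : ℝ → ℝ} (hφ : ConvexOn ℝ Set.univ φ)
    {s t a b : ℝ} (hsa : s ≤ a) (hat : a ≤ t) (hab : a + b = s + t) :
    φ a + φ b ≤ φ s + φ t := by
  rcases eq_or_lt_of_le (hsa.trans hat) with hst | hst
  · have ha : a = s := le_antisymm (hst ▸ hat) hsa
    have hb : b = t := by linarith
    simp [ha, hb, hst]
  · set l := (a - s) / (t - s) with hl
    have hts : (0:ℝ) < t - s := by linarith
    have hl0 : 0 ≤ l := div_nonneg (by linarith) hts.le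
    have hl1 : l ≤ 1 := by rw [div_le_one hts]; linarith
    have h1 : (1 - l) • s + l • t = a := by
      rw [hl]; simp only [smul_eq_mul]; linear_combination div_mul_cancel₀ (a - s) hts.ne'
    have h2 : l • s + (1 - l) • t = b := by
      have : b = s + t - a := by linarith
      rw [this, hl]; simp only [smul_eq_mul]; linear_combination -(div_mul_cancel₀ (a - s) hts.ne')
    have c1 := hφ.2 (Set.mem_univ s) (Set.mem_univ t) (sub_nonneg.mpr hl1) hl0 (by ring)
    have c2 := hφ.2 (Set.mem_univ s) (Set.mem_univ t) hl0 (sub_nonneg.mpr hl1) (by ring)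
    rw [h1] at c1; rw [h2] at c2
    simp only [smul_eq_mul] at c1 c2
    linarith

lemma supermodular_comp_sum {n : ℕ} {φ : ℝ → ℝ} (hφ : ConvexOn ℝ Set.univ φ) :
    Supermodular (fun x : Fin n → ℝ => φ (∑ i, x i)) := by
  intro x y
  have hsum : (∑ i, (x ⊔ y) i) + (∑ i, (x ⊓ y) i) = (∑ i, x i) + (∑ i, y i) := by
    rw [← Finset.sum_add_distrib, ← Finset.sum_add_distrib]
    refine Finset.sum_congr rfl fun i _ => ?_
    simp [Pi.sup_apply, Pi.inf_apply, max_add_min]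
  have hle1 : (∑ i, (x ⊓ y) i) ≤ ∑ i, x i :=
    Finset.sum_le_sum fun i _ => inf_le_left
  have hle2 : (∑ i, x i) ≤ ∑ i, (x ⊔ y) i :=
    Finset.sum_le_sum fun i _ => le_sup_left
  have := convex_pair hφ hle1 hle2 (by linarith)
  dsimp only
  linarith

/-- supermodular ordering of random vectors implies convex ordering of their sums. -/
theorem smOrder_implies_cxOrder_sum {Ω : Type*} [MeasurableSpace Ω]
    (μ : Measure Ω) [IsProbabilityMeasure μ] {n : ℕ}
    (X Y : Ω → Fin n → ℝ) (h : SmOrder μ X Y) :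
    CxOrder μ (fun ω => ∑ i, X ω i) (fun ω => ∑ i, Y ω i) := by
  intro φ hφ hX hY
  exact h (fun x => φ (∑ i, x i)) (supermodular_comp_sum hφ) hX hY
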